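/- Let N ≥ 1 and n ≥ 1 be integers, u an n×n real matrix, and η ∈ ℝⁿ with η_j ≥ 0 and η₁+⋯+η_n ≤ 1. Assume Σ_{j=1}^n η_j u_{rj} = 1 for all r = 1,…,n, and Σ_{j=1}^n η_j u_{rj}u_{sj} = 1 for all r ≠ s. Set Δ_j := Σ_{s=1}^n η_s u_{js}² − 1. Then the multivariable Krawtchouk polynomials are orthogonal with respect to the multinomial weight: for all m, m' ∈ ℕⁿ with Σm_k ≤ N and Σm'_k ≤ N, Σ_x b_n(x;N;η)·P_m(x)·P_{m'}(x) = δ_{m,m'} · [m₁!⋯m_n!·(N−Σ_k m_k)!/N!] · ∏_{j=1}^n Δ_j^{m_j}, where the sum runs over all x ∈ ℕⁿ with x₁+⋯+x_n ≤ N. -/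

import Mathlib

/-- The Pochhammer symbol `(a)ᵣ = a(a+1)⋯(a+r-1)`. -/
noncomputable def poch (a : ℝ) (r : ℕ) : ℝ := Polynomial.eval a (ascPochhammer ℝ r)

/-- The multinomial distribution
`b_n(x;N;η) = N!/(x₁!⋯x_n!(N-∑x)!) ∏ ηᵢ^{xᵢ} (1-∑η)^{N-∑x}`. -/
noncomputable def bn {n : ℕ} (N : ℕ) (x : Fin n → ℕ) (η : Fin n → ℝ) : ℝ :=
  (N.factorial : ℝ) / ((∏ i, ((x i).factorial : ℝ)) * ((N - ∑ i, x i).factorial : ℝ))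
    * (∏ i, η i ^ x i) * (1 - ∑ i, η i) ^ (N - ∑ i, x i)

/-- The multivariable Krawtchouk polynomial
`P_m(x) = F₁⁽ⁿ⁾(-m;-x;-N;u)`, a sum over all `n × n` matrices `(k_{ij})`
of nonnegative integers with `∑_{i,j} k_{ij} ≤ N`. -/
noncomputable def P {n : ℕ} (N : ℕ) (u : Fin n → Fin n → ℝ) (m x : Fin n → ℕ) : ℝ :=
  ∑ k ∈ Finset.filter (fun k => ∑ i, ∑ j, k i j ≤ N)
      (Fintype.piFinset fun _ : Fin n => Fintype.piFinset fun _ : Fin n => Finset.range (N + 1)),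
    ((∏ i, poch (-(m i : ℝ)) (∑ j, k i j)) * ∏ i, poch (-(x i : ℝ)) (∑ j, k j i)) /
      ((∏ i, ∏ j, ((k i j).factorial : ℝ)) * poch (-(N : ℝ)) (∑ i, ∑ j, k i j)) *
      ∏ i, ∏ j, u i j ^ k i j

open Finset

namespace Kr

/-- index finset: tuples with sum ≤ N -/
def S (N n : ℕ) : Finset (Fin n → ℕ) :=
  Finset.filter (fun x => ∑ i, x i ≤ N) (Fintype.piFinset fun _ : Fin n => Finset.range (N + 1))

lemma mem_S {N n : ℕ} {x : Fin n → ℕ} : x ∈ S N n ↔ ∑ i, x i ≤ N := by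
  constructor
  · intro h; exact (Finset.mem_filter.1 h).2
  · intro h
    refine Finset.mem_filter.2 ⟨Fintype.mem_piFinset.2 fun i => ?_, h⟩
    exact Finset.mem_range.2 (Nat.lt_succ_of_le ((Finset.single_le_sum (fun j _ => Nat.zero_le (x j)) (Finset.mem_univ i)).trans h))

/-- extended multinomial coefficient N!/(∏ xᵢ! (N-∑x)!) as a natural number -/
def mc {n : ℕ} (N : ℕ) (x : Fin n → ℕ) : ℕ :=
  Nat.multinomial Finset.univ (fun o : Option (Fin n) => o.elim (N - ∑ i, x i) x)

lemma mc_spec {n : ℕ} {N : ℕ} {x : Fin n → ℕ} (h : ∑ i, x i ≤ N) :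
    (mc N x) * ((∏ i, (x i).factorial) * (N - ∑ i, x i).factorial) = N.factorial := by
  have := Nat.multinomial_spec Finset.univ (fun o : Option (Fin n) => o.elim (N - ∑ i, x i) x)
  rw [Fintype.prod_option, Fintype.sum_option] at this
  simp only [Option.elim_none, Option.elim_some] at this
  rw [Nat.sub_add_cancel h] at this
  rw [← this, mc]; ring

lemma mc_pos {n : ℕ} (N : ℕ) (x : Fin n → ℕ) : 0 < mc N x := Nat.multinomial_pos _ _

lemma mc_cast_eq {n : ℕ} {N : ℕ} {x : Fin n → ℕ} (h : ∑ i, x i ≤ N) :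
    (mc N x : ℝ) = (N.factorial : ℝ) / ((∏ i, ((x i).factorial : ℝ)) * ((N - ∑ i, x i).factorial : ℝ)) := by
  have h1 := mc_spec h
  have h2 : ((∏ i, ((x i).factorial : ℝ)) * ((N - ∑ i, x i).factorial : ℝ)) ≠ 0 := by
    positivity
  field_simp
  push_cast [← h1]
  ring

/-- Extended multinomial theorem. -/
theorem EM {n : ℕ} {R : Type*} [CommSemiring R] (N : ℕ) (a : Fin n → R) (b : R) :
    (∑ i, a i + b) ^ N
      = ∑ x ∈ S N n, (mc N x : R) * (∏ i, a i ^ x i) * b ^ (N - ∑ i, x i) := by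
  have key : (∑ o : Option (Fin n), (Option.elim o b a)) ^ N
      = ∑ k ∈ Finset.piAntidiag Finset.univ N,
          (Nat.multinomial Finset.univ k : R) * ∏ o : Option (Fin n), (Option.elim o b a) ^ k o :=
    Finset.sum_pow_eq_sum_piAntidiag Finset.univ _ N
  rw [Fintype.sum_option] at key
  simp only [Option.elim_none, Option.elim_some] at key
  rw [add_comm (∑ i, a i) b, key]
  refine Finset.sum_nbij' (fun k => fun i => k (some i))
    (fun x => fun o : Option (Fin n) => o.elim (N - ∑ i, x i) x) ?_ ?_ ?_ ?_ ?_
  · intro k hk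
    rw [Finset.mem_piAntidiag] at hk
    have hsum : ∑ o : Option (Fin n), k o = N := hk.1
    rw [Fintype.sum_option] at hsum
    rw [mem_S]
    show ∑ i, k (some i) ≤ N
    omega
  · intro x hx
    rw [Finset.mem_piAntidiag]
    refine ⟨?_, fun o _ => Finset.mem_univ o⟩
    rw [Fintype.sum_option]
    simp only [Option.elim_none, Option.elim_some]
    exact Nat.sub_add_cancel (mem_S.1 hx)
  · intro k hk
    rw [Finset.mem_piAntidiag] at hk
    have hsum : ∑ o : Option (Fin n), k o = N := hk.1
    rw [Fintype.sum_option] at hsum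
    funext o
    cases o with
    | none => simp only [Option.elim_none]; omega
    | some i => rfl
  · intro x _; rfl
  · intro k hk
    rw [Finset.mem_piAntidiag] at hk
    have hsum : ∑ o : Option (Fin n), k o = N := hk.1
    rw [Fintype.sum_option] at hsum
    have hnone : k none = N - ∑ i, k (some i) := by omega
    rw [Fintype.prod_option]
    simp only [Option.elim_none, Option.elim_some]
    have : Nat.multinomial Finset.univ k = mc N (fun i => k (some i)) := by
      unfold mc
      congr 1
      funext o
      cases o with
      | none => simp only [Option.elim_none]; omega
      | some i => rfl
    rw [this, hnone]
    ring


lemma poch_neg_nat (m r : ℕ) : poch (-(m : ℝ)) r = (-1) ^ r * (m.descFactorial r : ℝ) := by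
  rw [poch, ascPochhammer_eval_neg_eq_descPochhammer, descPochhammer_eval_eq_descFactorial]

lemma poch_neg_nat_eq_zero {m r : ℕ} (h : m < r) : poch (-(m : ℝ)) r = 0 := by
  rw [poch_neg_nat, Nat.descFactorial_eq_zero_iff_lt.2 h]
  simp

lemma descFactorial_mul_factorial {k n : ℕ} (h : k ≤ n) :
    n.descFactorial k * (n - k).factorial = n.factorial := by
  rw [Nat.descFactorial_eq_factorial_mul_choose]
  rw [← Nat.choose_mul_factorial_mul_factorial h]
  ring

lemma mc_shift {n N : ℕ} (ρ p : Fin n → ℕ) (h : ∑ i, ρ i + ∑ i, p i ≤ N) :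
    mc N (ρ + p) * ∏ i, (ρ i + p i).descFactorial (ρ i)
      = N.descFactorial (∑ i, ρ i) * mc (N - ∑ i, ρ i) p := by
  have hsum : ∑ i, (ρ + p) i = ∑ i, ρ i + ∑ i, p i := by
    simp [Finset.sum_add_distrib]
  have hc : 0 < (∏ i, (p i).factorial) * (N - ∑ i, ρ i - ∑ i, p i).factorial :=
    Nat.mul_pos (Finset.prod_pos fun i _ => Nat.factorial_pos _) (Nat.factorial_pos _)
  apply Nat.eq_of_mul_eq_mul_right hc
  have lhs_eq : mc N (ρ + p) * (∏ i, (ρ i + p i).descFactorial (ρ i)) *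
      ((∏ i, (p i).factorial) * (N - ∑ i, ρ i - ∑ i, p i).factorial) = N.factorial := by
    have e1 : (∏ i, (ρ i + p i).descFactorial (ρ i)) * (∏ i, (p i).factorial)
        = ∏ i, ((ρ + p) i).factorial := by
      rw [← Finset.prod_mul_distrib]
      refine Finset.prod_congr rfl fun i _ => ?_
      have := descFactorial_mul_factorial (Nat.le_add_right (ρ i) (p i))
      rw [Nat.add_sub_cancel_left] at this
      simpa using this
    calc mc N (ρ + p) * (∏ i, (ρ i + p i).descFactorial (ρ i)) *
        ((∏ i, (p i).factorial) * (N - ∑ i, ρ i - ∑ i, p i).factorial)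
        = mc N (ρ + p) * ((∏ i, (ρ i + p i).descFactorial (ρ i)) * (∏ i, (p i).factorial)
            * (N - ∑ i, ρ i - ∑ i, p i).factorial) := by ring
      _ = mc N (ρ + p) * ((∏ i, ((ρ + p) i).factorial) * (N - ∑ i, (ρ + p) i).factorial) := by
            rw [e1, hsum, Nat.sub_sub]
      _ = N.factorial := mc_spec (by rw [hsum]; omega)
  rw [lhs_eq]
  have rhs_eq : N.descFactorial (∑ i, ρ i) * mc (N - ∑ i, ρ i) p *
      ((∏ i, (p i).factorial) * (N - ∑ i, ρ i - ∑ i, p i).factorial) = N.factorial := by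
    have h2 : mc (N - ∑ i, ρ i) p * ((∏ i, (p i).factorial) *
        (N - ∑ i, ρ i - ∑ i, p i).factorial) = (N - ∑ i, ρ i).factorial := mc_spec (by omega)
    calc N.descFactorial (∑ i, ρ i) * mc (N - ∑ i, ρ i) p *
        ((∏ i, (p i).factorial) * (N - ∑ i, ρ i - ∑ i, p i).factorial)
        = N.descFactorial (∑ i, ρ i) * (mc (N - ∑ i, ρ i) p *
            ((∏ i, (p i).factorial) * (N - ∑ i, ρ i - ∑ i, p i).factorial)) := by ring
      _ = N.descFactorial (∑ i, ρ i) * (N - ∑ i, ρ i).factorial := by rw [h2]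
      _ = N.factorial := descFactorial_mul_factorial (by omega)
  rw [rhs_eq]


variable {R : Type*} [CommRing R] [Algebra ℝ R]

lemma map_prod_aux {n : ℕ} (f : Fin n → ℝ) :
    algebraMap ℝ R (∏ i, f i) = ∏ i, algebraMap ℝ R (f i) := map_prod _ _ _

/-- Summation over `m` of the multinomial coefficient times `∏ poch(-mᵢ, ρᵢ) zᵢ^mᵢ`. -/
theorem L3 {n : ℕ} (N : ℕ) (ρ : Fin n → ℕ) (hρ : ∑ i, ρ i ≤ N) (z : Fin n → R) :
    ∑ m ∈ S N n, (mc N m : R) * algebraMap ℝ R (∏ i, poch (-(m i : ℝ)) (ρ i)) * ∏ i, z i ^ m i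
      = (-1 : R) ^ (∑ i, ρ i) * (N.descFactorial (∑ i, ρ i) : R) *
          (∏ i, z i ^ ρ i) * (1 + ∑ i, z i) ^ (N - ∑ i, ρ i) := by
  classical
  -- restrict to m with ρ ≤ m pointwise
  rw [← Finset.sum_filter_of_ne (p := fun m : Fin n → ℕ => ∀ i, ρ i ≤ m i) ?vanish]
  case vanish =>
    intro m _ hne
    by_contra hcon
    push_neg at hcon
    obtain ⟨i, hi⟩ := hcon
    apply hne
    have : (∏ j, poch (-(m j : ℝ)) (ρ j)) = 0 :=
      Finset.prod_eq_zero (Finset.mem_univ i) (poch_neg_nat_eq_zero hi)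
    rw [this, map_zero, mul_zero, zero_mul]
  -- RHS via extended multinomial theorem
  have hEM : ((1 : R) + ∑ i, z i) ^ (N - ∑ i, ρ i)
      = ∑ q ∈ S (N - ∑ i, ρ i) n, (mc (N - ∑ i, ρ i) q : R) * ∏ i, z i ^ q i := by
    rw [add_comm]
    rw [EM (N - ∑ i, ρ i) z 1]
    refine Finset.sum_congr rfl fun q _ => by rw [one_pow, mul_one]
  rw [hEM, Finset.mul_sum]
  refine Finset.sum_nbij' (fun m => fun i => m i - ρ i) (fun q => fun i => ρ i + q i)
    ?_ ?_ ?_ ?_ ?_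
  · intro m hm
    rw [Finset.mem_filter, mem_S] at hm
    rw [mem_S]
    show ∑ i, (m i - ρ i) ≤ N - ∑ i, ρ i
    have : ∑ i, (m i - ρ i) = ∑ i, m i - ∑ i, ρ i :=
      Finset.sum_tsub_distrib Finset.univ fun i _ => hm.2 i
    omega
  · intro q hq
    rw [mem_S] at hq
    rw [Finset.mem_filter, mem_S]
    refine ⟨?_, fun i => Nat.le_add_right _ _⟩
    show ∑ i, (ρ i + q i) ≤ N
    rw [Finset.sum_add_distrib]
    omega
  · intro m hm
    rw [Finset.mem_filter] at hm
    funext i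
    exact Nat.add_sub_cancel' (hm.2 i)
  · intro q _
    funext i
    exact Nat.add_sub_cancel_left _ _
  · intro m hm
    rw [Finset.mem_filter, mem_S] at hm
    obtain ⟨hmN, hρm⟩ := hm
    -- poch product
    have hpoch : (∏ i, poch (-(m i : ℝ)) (ρ i))
        = (-1 : ℝ) ^ (∑ i, ρ i) * ∏ i, ((m i).descFactorial (ρ i) : ℝ) := by
      rw [← Finset.prod_pow_eq_pow_sum, ← Finset.prod_mul_distrib]
      exact Finset.prod_congr rfl fun i _ => poch_neg_nat _ _
    rw [hpoch, map_mul, map_prod_aux]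
    have hmap1 : algebraMap ℝ R ((-1 : ℝ) ^ (∑ i, ρ i)) = (-1 : R) ^ (∑ i, ρ i) := by
      rw [map_pow, map_neg, map_one]
    have hmap2 : ∀ i, algebraMap ℝ R (((m i).descFactorial (ρ i) : ℝ))
        = (((m i).descFactorial (ρ i) : ℕ) : R) := fun i => by
      rw [map_natCast]
    simp only [hmap2, hmap1]
    -- nat coefficient identity
    have hq : ∑ i, ρ i + ∑ i, (m i - ρ i) ≤ N := by
      have : ∑ i, (m i - ρ i) = ∑ i, m i - ∑ i, ρ i :=
        Finset.sum_tsub_distrib Finset.univ fun i _ => hρm i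
      omega
    have hnat := mc_shift ρ (fun i => m i - ρ i) hq
    have hrepl : (ρ + fun i => m i - ρ i) = m := by
      funext i
      exact Nat.add_sub_cancel' (hρm i)
    rw [hrepl] at hnat
    have hnat2 : ∀ i, (ρ i + (m i - ρ i)).descFactorial (ρ i) = (m i).descFactorial (ρ i) :=
      fun i => by rw [Nat.add_sub_cancel' (hρm i)]
    simp only [hnat2] at hnat
    -- cast to R
    have hcast : (mc N m : R) * ∏ i, (((m i).descFactorial (ρ i) : ℕ) : R)
        = (N.descFactorial (∑ i, ρ i) : R) * (mc (N - ∑ i, ρ i) (fun i => m i - ρ i) : R) := by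
      have := congrArg (fun t : ℕ => (t : R)) hnat
      push_cast at this
      convert this using 2
    -- z powers
    have hz : (∏ i, z i ^ m i) = (∏ i, z i ^ ρ i) * ∏ i, z i ^ (m i - ρ i) := by
      rw [← Finset.prod_mul_distrib]
      refine Finset.prod_congr rfl fun i _ => ?_
      rw [← pow_add, Nat.add_sub_cancel' (hρm i)]
    calc (mc N m : R) * ((-1 : R) ^ (∑ i, ρ i) * ∏ i, (((m i).descFactorial (ρ i) : ℕ) : R))
          * ∏ i, z i ^ m i
        = (-1 : R) ^ (∑ i, ρ i) * ((mc N m : R) * ∏ i, (((m i).descFactorial (ρ i) : ℕ) : R))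
          * ∏ i, z i ^ m i := by ring
      _ = (-1 : R) ^ (∑ i, ρ i) * ((N.descFactorial (∑ i, ρ i) : R) *
            (mc (N - ∑ i, ρ i) (fun i => m i - ρ i) : R)) *
            ((∏ i, z i ^ ρ i) * ∏ i, z i ^ (m i - ρ i)) := by rw [hcast, hz]
      _ = (-1 : R) ^ (∑ i, ρ i) * (N.descFactorial (∑ i, ρ i) : R) * (∏ i, z i ^ ρ i) *
            ((mc (N - ∑ i, ρ i) (fun i => m i - ρ i) : R) * ∏ i, z i ^ (m i - ρ i)) := by ring


lemma mc_mul_prod_factorial {n x : ℕ} (κ : Fin n → ℕ) (h : ∑ a, κ a ≤ x) :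
    mc x κ * ∏ a, (κ a).factorial = x.descFactorial (∑ a, κ a) := by
  apply Nat.eq_of_mul_eq_mul_right (Nat.factorial_pos (x - ∑ a, κ a))
  rw [mul_assoc, descFactorial_mul_factorial h]
  exact mc_spec h

lemma filter_piFinset_eq_S {n N x : ℕ} (hx : x ≤ N) :
    (Fintype.piFinset fun _ : Fin n => Finset.range (N + 1)).filter
        (fun κ => ∑ a, κ a ≤ x) = S x n := by
  ext κ
  rw [Finset.mem_filter, mem_S]
  constructor
  · exact fun h => h.2
  · intro h
    refine ⟨Fintype.mem_piFinset.2 fun a => Finset.mem_range.2 ?_, h⟩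
    have := Finset.single_le_sum (fun j _ => Nat.zero_le (κ j)) (Finset.mem_univ a)
    omega

/-- Per-column summation identity. -/
theorem L4 {n : ℕ} (N x : ℕ) (hx : x ≤ N) (y : Fin n → R) (Z : R) :
    ∑ κ ∈ (Fintype.piFinset fun _ : Fin n => Finset.range (N + 1)).filter
        (fun κ => ∑ a, κ a ≤ x),
      algebraMap ℝ R (poch (-(x : ℝ)) (∑ a, κ a) / ∏ a, ((κ a).factorial : ℝ)) *
        (∏ a, y a ^ κ a) * (1 + Z) ^ (x - ∑ a, κ a)
      = (1 + Z - ∑ a, y a) ^ x := by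
  rw [filter_piFinset_eq_S hx]
  have hrhs : (1 + Z - ∑ a, y a) ^ x = (∑ a, -y a + (1 + Z)) ^ x := by
    rw [Finset.sum_neg_distrib]
    ring_nf
  rw [hrhs, EM x (fun a => -y a) (1 + Z)]
  refine Finset.sum_congr rfl fun κ hκ => ?_
  have hs : ∑ a, κ a ≤ x := mem_S.1 hκ
  have hcoef : algebraMap ℝ R (poch (-(x : ℝ)) (∑ a, κ a) / ∏ a, ((κ a).factorial : ℝ))
      = (mc x κ : R) * (-1 : R) ^ (∑ a, κ a) := by
    have hnat := mc_mul_prod_factorial κ hs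
    have hfac : (∏ a, ((κ a).factorial : ℝ)) ≠ 0 := by positivity
    have hreal : poch (-(x : ℝ)) (∑ a, κ a) / ∏ a, ((κ a).factorial : ℝ)
        = (mc x κ : ℝ) * (-1 : ℝ) ^ (∑ a, κ a) := by
      rw [poch_neg_nat]
      rw [eq_comm, mul_comm, eq_div_iff hfac]
      have : ((x.descFactorial (∑ a, κ a) : ℕ) : ℝ)
          = (mc x κ : ℝ) * ∏ a, ((κ a).factorial : ℝ) := by
        rw [← hnat]
        push_cast
        ring
      rw [this]
      ring
    rw [hreal, map_mul, map_natCast, map_pow, map_neg, map_one]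
  rw [hcoef]
  have hy : ∏ a, (-y a) ^ κ a = (-1 : R) ^ (∑ a, κ a) * ∏ a, y a ^ κ a := by
    rw [← Finset.prod_pow_eq_pow_sum, ← Finset.prod_mul_distrib]
    exact Finset.prod_congr rfl fun a _ => by rw [neg_pow]
  rw [hy]
  ring


/-- ambient finset of n×n matrices with entries ≤ N -/
def PF (N n : ℕ) : Finset (Fin n → Fin n → ℕ) :=
  Fintype.piFinset fun _ : Fin n => Fintype.piFinset fun _ : Fin n => Finset.range (N + 1)

/-- matrices with total sum ≤ N -/
def KK (N n : ℕ) : Finset (Fin n → Fin n → ℕ) :=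
  (PF N n).filter (fun k => ∑ i, ∑ j, k i j ≤ N)

noncomputable def cc {n : ℕ} (N : ℕ) (u : Fin n → Fin n → ℝ) (x : Fin n → ℕ)
    (k : Fin n → Fin n → ℕ) : ℝ :=
  (∏ i, poch (-(x i : ℝ)) (∑ j, k j i)) /
      ((∏ i, ∏ j, ((k i j).factorial : ℝ)) * poch (-(N : ℝ)) (∑ i, ∑ j, k i j)) *
    ∏ i, ∏ j, u i j ^ k i j

noncomputable def dd {n : ℕ} (N : ℕ) (u : Fin n → Fin n → ℝ) (x : Fin n → ℕ)
    (k : Fin n → Fin n → ℕ) : ℝ :=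
  (∏ i, poch (-(x i : ℝ)) (∑ j, k j i)) / (∏ i, ∏ j, ((k i j).factorial : ℝ)) *
    ∏ i, ∏ j, u i j ^ k i j

lemma P_eq_sum_cc {n : ℕ} (N : ℕ) (u : Fin n → Fin n → ℝ) (m x : Fin n → ℕ) :
    P N u m x = ∑ k ∈ KK N n, (∏ i, poch (-(m i : ℝ)) (∑ j, k i j)) * cc N u x k := by
  rw [P, KK, PF]
  refine Finset.sum_congr rfl fun k _ => ?_
  rw [cc]
  ring

lemma cc_mul_eq_dd {n : ℕ} {N : ℕ} (u : Fin n → Fin n → ℝ) (x : Fin n → ℕ)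
    {k : Fin n → Fin n → ℕ} (hk : ∑ i, ∑ j, k i j ≤ N) :
    cc N u x k * ((-1 : ℝ) ^ (∑ i, ∑ j, k i j) * (N.descFactorial (∑ i, ∑ j, k i j) : ℝ))
      = dd N u x k := by
  have hD : ((N.descFactorial (∑ i, ∑ j, k i j) : ℕ) : ℝ) ≠ 0 := by
    have : N.descFactorial (∑ i, ∑ j, k i j) ≠ 0 := by
      rw [Ne, Nat.descFactorial_eq_zero_iff_lt]; omega
    exact_mod_cast this
  have hfac : (∏ i, ∏ j, ((k i j).factorial : ℝ)) ≠ 0 := by positivity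
  rw [cc, dd, poch_neg_nat]
  have hne : ((-1 : ℝ) ^ (∑ i, ∑ j, k i j) * (N.descFactorial (∑ i, ∑ j, k i j) : ℝ)) ≠ 0 := by
    intro h
    rcases mul_eq_zero.1 h with h | h
    · exact pow_ne_zero _ (by norm_num) h
    · exact hD h
  field_simp

lemma dd_eq_zero {n : ℕ} {N : ℕ} (u : Fin n → Fin n → ℝ) (x : Fin n → ℕ)
    {k : Fin n → Fin n → ℕ} (h : ∃ i, x i < ∑ a, k a i) :
    dd N u x k = 0 := by
  obtain ⟨i, hi⟩ := h
  have hz : (∏ i, poch (-(x i : ℝ)) (∑ j, k j i)) = 0 :=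
    Finset.prod_eq_zero (Finset.mem_univ i) (poch_neg_nat_eq_zero hi)
  rw [dd, hz, zero_div, zero_mul]


noncomputable def FF {n : ℕ} (N : ℕ) (u : Fin n → Fin n → ℝ) (x : Fin n → ℕ)
    (z : Fin n → R) (k : Fin n → Fin n → ℕ) : R :=
  algebraMap ℝ R (dd N u x k) * (∏ a, z a ^ (∑ j, k a j)) *
    (1 + ∑ a, z a) ^ (N - ∑ i, ∑ j, k i j)

noncomputable def gg {n : ℕ} (N : ℕ) (u : Fin n → Fin n → ℝ) (x : Fin n → ℕ)
    (z : Fin n → R) (i : Fin n) (κ : Fin n → ℕ) : R :=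
  algebraMap ℝ R (poch (-(x i : ℝ)) (∑ a, κ a) / ∏ a, ((κ a).factorial : ℝ)) *
    (∏ a, (z a * algebraMap ℝ R (u a i)) ^ κ a) * (1 + ∑ a, z a) ^ (x i - ∑ a, κ a)

lemma FF_eq_zero {n : ℕ} {N : ℕ} (u : Fin n → Fin n → ℝ) (x : Fin n → ℕ)
    (z : Fin n → R) {k : Fin n → Fin n → ℕ} (h : ¬ ∀ i, ∑ a, k a i ≤ x i) :
    FF N u x z k = 0 := by
  push_neg at h
  rw [FF, dd_eq_zero u x h, map_zero, zero_mul, zero_mul]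

lemma FF_factor {n : ℕ} {N : ℕ} (u : Fin n → Fin n → ℝ) (x : Fin n → ℕ)
    (z : Fin n → R) {k : Fin n → Fin n → ℕ} (hx : ∑ i, x i ≤ N)
    (hall : ∀ i, ∑ a, k a i ≤ x i) :
    FF N u x z k = (1 + ∑ a, z a) ^ (N - ∑ i, x i) * ∏ i, gg N u x z i (fun a => k a i) := by
  have hcolsum : ∑ i, ∑ j, k i j = ∑ i, ∑ a, k a i := Finset.sum_comm
  -- (c1) factorial reorganization
  have hfac : (∏ i, ∏ j, ((k i j).factorial : ℝ)) = ∏ i, ∏ a, ((k a i).factorial : ℝ) :=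
    Finset.prod_comm
  have hc1 : dd N u x k
      = (∏ i, (poch (-(x i : ℝ)) (∑ a, k a i) / ∏ a, ((k a i).factorial : ℝ))) *
          ∏ i, ∏ j, u i j ^ k i j := by
    rw [dd, hfac, Finset.prod_div_distrib]
  -- map through algebraMap
  have hmap : algebraMap ℝ R (dd N u x k)
      = (∏ i, algebraMap ℝ R (poch (-(x i : ℝ)) (∑ a, k a i) / ∏ a, ((k a i).factorial : ℝ))) *
          ∏ i, ∏ j, (algebraMap ℝ R (u i j)) ^ k i j := by
    rw [hc1, map_mul, map_prod]
    congr 1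
    rw [map_prod]
    exact Finset.prod_congr rfl fun i _ => by rw [map_prod]; exact Finset.prod_congr rfl fun j _ => by rw [map_pow]
  -- (c2) z powers combined with u powers
  have hc2 : (∏ a, z a ^ (∑ j, k a j)) * (∏ i, ∏ j, (algebraMap ℝ R (u i j)) ^ k i j)
      = ∏ i, ∏ a, (z a * algebraMap ℝ R (u a i)) ^ k a i := by
    have hz : (∏ a, z a ^ (∑ j, k a j)) = ∏ a, ∏ j, z a ^ k a j :=
      Finset.prod_congr rfl fun a _ => (Finset.prod_pow_eq_pow_sum _ _ _).symm
    rw [hz, ← Finset.prod_mul_distrib]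
    have : ∀ a, (∏ j, z a ^ k a j) * (∏ j, (algebraMap ℝ R (u a j)) ^ k a j)
        = ∏ j, (z a * algebraMap ℝ R (u a j)) ^ k a j := fun a => by
      rw [← Finset.prod_mul_distrib]
      exact Finset.prod_congr rfl fun j _ => (mul_pow _ _ _).symm
    rw [Finset.prod_congr rfl fun a _ => this a]
    exact Finset.prod_comm
  -- (c3) exponent split
  have hσx : ∑ i, ∑ a, k a i ≤ ∑ i, x i := Finset.sum_le_sum fun i _ => hall i
  have hsub : ∑ i, (x i - ∑ a, k a i) = ∑ i, x i - ∑ i, ∑ a, k a i :=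
    Finset.sum_tsub_distrib Finset.univ fun i _ => hall i
  have hexp : N - ∑ i, ∑ j, k i j = (N - ∑ i, x i) + ∑ i, (x i - ∑ a, k a i) := by
    rw [hcolsum, hsub]; omega
  have hc3 : ((1 : R) + ∑ a, z a) ^ (N - ∑ i, ∑ j, k i j)
      = (1 + ∑ a, z a) ^ (N - ∑ i, x i) * ∏ i, (1 + ∑ a, z a) ^ (x i - ∑ a, k a i) := by
    rw [hexp, pow_add, Finset.prod_pow_eq_pow_sum]
  rw [FF, hmap, hc3]
  have hprod : ∏ i, gg N u x z i (fun a => k a i)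
      = (∏ i, algebraMap ℝ R (poch (-(x i : ℝ)) (∑ a, k a i) / ∏ a, ((k a i).factorial : ℝ))) *
          (∏ i, ∏ a, (z a * algebraMap ℝ R (u a i)) ^ k a i) *
          ∏ i, (1 + ∑ a, z a) ^ (x i - ∑ a, k a i) := by
    simp only [gg]
    rw [Finset.prod_mul_distrib, Finset.prod_mul_distrib]
  rw [hprod, ← hc2]
  ring


/-- The generating function of the multivariable Krawtchouk polynomials. -/
theorem GF {n : ℕ} (N : ℕ) (u : Fin n → Fin n → ℝ) (x : Fin n → ℕ) (hx : ∑ i, x i ≤ N)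
    (z : Fin n → R) :
    ∑ m ∈ S N n, (mc N m : R) * algebraMap ℝ R (P N u m x) * ∏ a, z a ^ m a
      = (∏ i, (1 + ∑ a, z a - ∑ a, z a * algebraMap ℝ R (u a i)) ^ x i) *
          (1 + ∑ a, z a) ^ (N - ∑ i, x i) := by
  classical
  have stepA : (∑ m ∈ S N n, (mc N m : R) * algebraMap ℝ R (P N u m x) * ∏ a, z a ^ m a)
      = ∑ k ∈ KK N n, FF N u x z k := by
    have expand : ∀ m ∈ S N n, (mc N m : R) * algebraMap ℝ R (P N u m x) * ∏ a, z a ^ m a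
        = ∑ k ∈ KK N n, algebraMap ℝ R (cc N u x k) *
            ((mc N m : R) * algebraMap ℝ R (∏ i, poch (-(m i : ℝ)) (∑ j, k i j)) *
              ∏ a, z a ^ m a) := by
      intro m _
      rw [P_eq_sum_cc N u m x, map_sum, Finset.mul_sum, Finset.sum_mul]
      refine Finset.sum_congr rfl fun k _ => ?_
      rw [map_mul]
      ring
    rw [Finset.sum_congr rfl expand, Finset.sum_comm]
    refine Finset.sum_congr rfl fun k hk => ?_
    have hs : ∑ i, ∑ j, k i j ≤ N := (Finset.mem_filter.1 hk).2
    have hL3 := L3 (R := R) N (fun i => ∑ j, k i j) hs z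
    rw [← Finset.mul_sum, hL3]
    -- now reduce the constants
    have hmm : (-1 : R) ^ (∑ i, ∑ j, k i j) * ((N.descFactorial (∑ i, ∑ j, k i j) : ℕ) : R)
        = algebraMap ℝ R ((-1 : ℝ) ^ (∑ i, ∑ j, k i j) *
            ((N.descFactorial (∑ i, ∑ j, k i j) : ℕ) : ℝ)) := by
      rw [map_mul, map_pow, map_neg, map_one, map_natCast]
    rw [FF]
    calc algebraMap ℝ R (cc N u x k) *
          ((-1 : R) ^ (∑ i, ∑ j, k i j) * ((N.descFactorial (∑ i, ∑ j, k i j) : ℕ) : R) *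
            (∏ i, z i ^ (∑ j, k i j)) * (1 + ∑ i, z i) ^ (N - ∑ i, ∑ j, k i j))
        = (algebraMap ℝ R (cc N u x k) *
            ((-1 : R) ^ (∑ i, ∑ j, k i j) * ((N.descFactorial (∑ i, ∑ j, k i j) : ℕ) : R))) *
            (∏ i, z i ^ (∑ j, k i j)) * (1 + ∑ i, z i) ^ (N - ∑ i, ∑ j, k i j) := by ring
      _ = algebraMap ℝ R (dd N u x k) * (∏ a, z a ^ (∑ j, k a j)) *
            (1 + ∑ a, z a) ^ (N - ∑ i, ∑ j, k i j) := by
          rw [hmm, ← map_mul, cc_mul_eq_dd u x hs]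
  rw [stepA]
  -- step B : change the index set
  have stepB : ∑ k ∈ KK N n, FF N u x z k
      = ∑ k ∈ (PF N n).filter (fun k => ∀ i, ∑ a, k a i ≤ x i), FF N u x z k := by
    have h1 : ∑ k ∈ KK N n, FF N u x z k = ∑ k ∈ PF N n, FF N u x z k := by
      apply Finset.sum_subset (Finset.filter_subset _ _)
      intro k hkPF hkK
      have hgt : ¬ ∑ i, ∑ j, k i j ≤ N := fun h => hkK (Finset.mem_filter.2 ⟨hkPF, h⟩)
      apply FF_eq_zero
      intro hall
      apply hgt
      have h2 : ∑ i, ∑ a, k a i ≤ ∑ i, x i := Finset.sum_le_sum fun i _ => hall i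
      have h3 : ∑ i, ∑ j, k i j = ∑ i, ∑ a, k a i := Finset.sum_comm
      omega
    rw [h1]
    exact (Finset.sum_filter_of_ne fun k _ hne => by
      by_contra hcon
      exact hne (FF_eq_zero u x z hcon)).symm
  rw [stepB]
  -- step C
  have hFk : ∀ k ∈ (PF N n).filter (fun k => ∀ i, ∑ a, k a i ≤ x i),
      FF N u x z k = (1 + ∑ a, z a) ^ (N - ∑ i, x i) * ∏ i, gg N u x z i (fun a => k a i) :=
    fun k hk => FF_factor u x z hx ((Finset.mem_filter.1 hk).2)
  rw [Finset.sum_congr rfl hFk, ← Finset.mul_sum]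
  -- transpose the summation
  have htrans : ∑ k ∈ (PF N n).filter (fun k => ∀ i, ∑ a, k a i ≤ x i),
        ∏ i, gg N u x z i (fun a => k a i)
      = ∑ k' ∈ Fintype.piFinset (fun i => (Fintype.piFinset fun _ : Fin n =>
            Finset.range (N + 1)).filter (fun κ => ∑ a, κ a ≤ x i)),
          ∏ i, gg N u x z i (k' i) := by
    refine Finset.sum_nbij' (fun k => fun i a => k a i) (fun k' => fun a i => k' i a)
      ?_ ?_ ?_ ?_ ?_
    · intro k hk
      rw [Finset.mem_filter, PF, Fintype.mem_piFinset] at hk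
      rw [Fintype.mem_piFinset]
      intro i
      rw [Finset.mem_filter, Fintype.mem_piFinset]
      exact ⟨fun a => Fintype.mem_piFinset.1 (hk.1 a) i, hk.2 i⟩
    · intro k' hk'
      rw [Fintype.mem_piFinset] at hk'
      rw [Finset.mem_filter, PF, Fintype.mem_piFinset]
      constructor
      · intro a
        rw [Fintype.mem_piFinset]
        intro i
        exact (Fintype.mem_piFinset.1 (Finset.mem_filter.1 (hk' i)).1) a
      · intro i
        exact (Finset.mem_filter.1 (hk' i)).2
    · intro k _; rfl
    · intro k' _; rfl
    · intro k _; rfl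
  rw [htrans, ← Finset.prod_univ_sum]
  -- apply L4 in each column
  have hcol : ∀ i, ∑ κ ∈ (Fintype.piFinset fun _ : Fin n =>
        Finset.range (N + 1)).filter (fun κ => ∑ a, κ a ≤ x i), gg N u x z i κ
      = (1 + ∑ a, z a - ∑ a, z a * algebraMap ℝ R (u a i)) ^ x i := by
    intro i
    have hxi : x i ≤ N :=
      le_trans (Finset.single_le_sum (fun j _ => Nat.zero_le (x j)) (Finset.mem_univ i)) hx
    have := L4 (R := R) N (x i) hxi (fun a => z a * algebraMap ℝ R (u a i)) (∑ a, z a)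
    rw [← this]
    rfl
  rw [Finset.prod_congr rfl fun i _ => hcol i]
  ring


section Bracket

variable {n : ℕ} (u : Fin n → Fin n → ℝ) (η : Fin n → ℝ)

lemma sum_eta_c (h1 : ∀ r, ∑ j, η j * u r j = 1) (a : Fin n) :
    ∑ i, η i * (1 - u a i) = (∑ j, η j) - 1 := by
  have : ∀ i, η i * (1 - u a i) = η i - η i * u a i := fun i => by ring
  rw [Finset.sum_congr rfl fun i _ => this i, Finset.sum_sub_distrib, h1 a]

lemma sum_eta_cc (h1 : ∀ r, ∑ j, η j * u r j = 1)
    (h2 : ∀ r s, r ≠ s → ∑ j, η j * u r j * u s j = 1) (a b : Fin n) :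
    ∑ i, η i * (1 - u a i) * (1 - u b i)
      = ((∑ j, η j) - 1) + (if a = b then (∑ s, η s * u a s ^ 2) - 1 else 0) := by
  by_cases hab : a = b
  · subst hab
    rw [if_pos rfl]
    have : ∀ i, η i * (1 - u a i) * (1 - u a i)
        = η i - 2 * (η i * u a i) + η i * u a i ^ 2 := fun i => by ring
    rw [Finset.sum_congr rfl fun i _ => this i, Finset.sum_add_distrib,
      Finset.sum_sub_distrib, ← Finset.mul_sum, h1 a]
    ring
  · simp only [if_neg hab, add_zero]
    have : ∀ i, η i * (1 - u a i) * (1 - u b i)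
        = η i - η i * u a i - η i * u b i + η i * u a i * u b i := fun i => by ring
    rw [Finset.sum_congr rfl fun i _ => this i, Finset.sum_add_distrib,
      Finset.sum_sub_distrib, Finset.sum_sub_distrib, h1 a, h1 b, h2 a b hab]
    ring

theorem bracket (h1 : ∀ r, ∑ j, η j * u r j = 1)
    (h2 : ∀ r s, r ≠ s → ∑ j, η j * u r j * u s j = 1) (z w : Fin n → R) :
    ∑ i, algebraMap ℝ R (η i) * (1 + ∑ a, z a - ∑ a, z a * algebraMap ℝ R (u a i)) *
        (1 + ∑ b, w b - ∑ b, w b * algebraMap ℝ R (u b i))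
      + algebraMap ℝ R (1 - ∑ j, η j) * ((1 + ∑ a, z a) * (1 + ∑ b, w b))
    = 1 + ∑ a, algebraMap ℝ R ((∑ s, η s * u a s ^ 2) - 1) * (z a * w a) := by
  classical
  set φ := algebraMap ℝ R with hφ
  have hA : ∀ (v : Fin n → R) (i : Fin n),
      (1 + ∑ a, v a - ∑ a, v a * φ (u a i)) = 1 + ∑ a, v a * φ (1 - u a i) := by
    intro v i
    have : ∑ a, v a * φ (1 - u a i) = ∑ a, (v a - v a * φ (u a i)) := by
      refine Finset.sum_congr rfl fun a _ => ?_
      rw [map_sub, map_one, mul_sub, mul_one]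
    rw [this, Finset.sum_sub_distrib]
    ring
  simp only [hA z, hA w]
  -- expand each term
  have hexp : ∀ i, φ (η i) * (1 + ∑ a, z a * φ (1 - u a i)) * (1 + ∑ b, w b * φ (1 - u b i))
      = φ (η i) + (∑ a, z a * φ (η i * (1 - u a i)))
        + (∑ b, w b * φ (η i * (1 - u b i)))
        + ∑ a, ∑ b, (z a * w b) * φ (η i * (1 - u a i) * (1 - u b i)) := by
    intro i
    have e1 : ∀ a, z a * φ (η i * (1 - u a i)) = φ (η i) * (z a * φ (1 - u a i)) := by
      intro a; rw [map_mul]; ring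
    have e2 : ∀ b, w b * φ (η i * (1 - u b i)) = φ (η i) * (w b * φ (1 - u b i)) := by
      intro b; rw [map_mul]; ring
    have e3 : ∀ a b, (z a * w b) * φ (η i * (1 - u a i) * (1 - u b i))
        = φ (η i) * ((z a * φ (1 - u a i)) * (w b * φ (1 - u b i))) := by
      intro a b; rw [map_mul, map_mul]; ring
    simp only [Finset.sum_congr rfl fun a _ => e1 a, Finset.sum_congr rfl fun b _ => e2 b]
    rw [Finset.sum_congr rfl fun a _ => Finset.sum_congr rfl fun b _ => e3 a b]
    rw [← Finset.mul_sum, ← Finset.mul_sum]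
    have : ∑ a, ∑ b, φ (η i) * ((z a * φ (1 - u a i)) * (w b * φ (1 - u b i)))
        = φ (η i) * ((∑ a, z a * φ (1 - u a i)) * (∑ b, w b * φ (1 - u b i))) := by
      rw [Finset.sum_mul_sum, Finset.mul_sum]
      refine Finset.sum_congr rfl fun a _ => ?_
      rw [Finset.mul_sum]
    rw [this]
    ring
  rw [Finset.sum_congr rfl fun i _ => hexp i]
  rw [Finset.sum_add_distrib, Finset.sum_add_distrib, Finset.sum_add_distrib]
  -- evaluate the four sums
  have E1 : ∑ i, φ (η i) = φ (∑ j, η j) := (map_sum φ _ _).symm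
  have E2 : ∑ i, ∑ a, z a * φ (η i * (1 - u a i)) = φ ((∑ j, η j) - 1) * ∑ a, z a := by
    rw [Finset.sum_comm]
    have : ∀ a, ∑ i, z a * φ (η i * (1 - u a i)) = φ ((∑ j, η j) - 1) * z a := by
      intro a
      rw [← Finset.mul_sum, ← map_sum, sum_eta_c u η h1 a, mul_comm]
    rw [Finset.sum_congr rfl fun a _ => this a, ← Finset.mul_sum]
  have E3 : ∑ i, ∑ b, w b * φ (η i * (1 - u b i)) = φ ((∑ j, η j) - 1) * ∑ b, w b := by
    rw [Finset.sum_comm]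
    have : ∀ b, ∑ i, w b * φ (η i * (1 - u b i)) = φ ((∑ j, η j) - 1) * w b := by
      intro b
      rw [← Finset.mul_sum, ← map_sum, sum_eta_c u η h1 b, mul_comm]
    rw [Finset.sum_congr rfl fun b _ => this b, ← Finset.mul_sum]
  have E4 : ∑ i, ∑ a, ∑ b, (z a * w b) * φ (η i * (1 - u a i) * (1 - u b i))
      = φ ((∑ j, η j) - 1) * ((∑ a, z a) * (∑ b, w b))
        + ∑ a, φ ((∑ s, η s * u a s ^ 2) - 1) * (z a * w a) := by
    rw [Finset.sum_comm]
    have swap2 : ∀ a, ∑ i, ∑ b, (z a * w b) * φ (η i * (1 - u a i) * (1 - u b i))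
        = ∑ b, ∑ i, (z a * w b) * φ (η i * (1 - u a i) * (1 - u b i)) :=
      fun a => Finset.sum_comm
    rw [Finset.sum_congr rfl fun a _ => swap2 a]
    have inner : ∀ a b, ∑ i, (z a * w b) * φ (η i * (1 - u a i) * (1 - u b i))
        = (z a * w b) * φ ((∑ j, η j) - 1)
          + (if a = b then φ ((∑ s, η s * u a s ^ 2) - 1) * (z a * w a) else 0) := by
      intro a b
      rw [← Finset.mul_sum, ← map_sum, sum_eta_cc u η h1 h2 a b, map_add]
      rw [apply_ite φ, map_zero, mul_add, mul_ite, mul_zero]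
      by_cases hab : a = b
      · subst hab
        simp only [if_pos rfl]
        ring_nf
      · simp only [if_neg hab]
    rw [Finset.sum_congr rfl fun a _ => Finset.sum_congr rfl fun b _ => inner a b]
    have split : ∀ a, ∑ b, ((z a * w b) * φ ((∑ j, η j) - 1)
        + (if a = b then φ ((∑ s, η s * u a s ^ 2) - 1) * (z a * w a) else 0))
        = (z a * φ ((∑ j, η j) - 1)) * (∑ b, w b)
          + φ ((∑ s, η s * u a s ^ 2) - 1) * (z a * w a) := by
      intro a
      rw [Finset.sum_add_distrib, Finset.sum_ite_eq Finset.univ a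
        (fun _ => φ ((∑ s, η s * u a s ^ 2) - 1) * (z a * w a))]
      simp only [Finset.mem_univ, if_pos]
      congr 1
      rw [Finset.mul_sum]
      refine Finset.sum_congr rfl fun b _ => by ring
    rw [Finset.sum_congr rfl fun a _ => split a, Finset.sum_add_distrib]
    congr 1
    rw [← Finset.sum_mul, ← Finset.sum_mul]
    ring
  rw [E1, E2, E3, E4]
  have m1 : φ ((∑ j, η j) - 1) = φ (∑ j, η j) - 1 := by rw [map_sub, map_one]
  have m2 : φ (1 - ∑ j, η j) = 1 - φ (∑ j, η j) := by rw [map_sub, map_one]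
  rw [m1, m2]
  ring

end Bracket


lemma bn_eq {n N : ℕ} (x : Fin n → ℕ) (η : Fin n → ℝ) (h : ∑ i, x i ≤ N) :
    bn N x η = (mc N x : ℝ) * (∏ i, η i ^ x i) * (1 - ∑ i, η i) ^ (N - ∑ i, x i) := by
  rw [bn, mc_cast_eq h]

section Main

variable {n N : ℕ} (u : Fin n → Fin n → ℝ) (η : Fin n → ℝ)

local notation "Poly" => MvPolynomial (Fin n ⊕ Fin n) ℝ

theorem key1
    (h1 : ∀ r, ∑ j, η j * u r j = 1)
    (h2 : ∀ r s, r ≠ s → ∑ j, η j * u r j * u s j = 1) :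
    ∑ x ∈ S N n, algebraMap ℝ Poly (bn N x η) *
        ((∏ i, (1 + (∑ a, (MvPolynomial.X (Sum.inl a) : Poly))
            - ∑ a, MvPolynomial.X (Sum.inl a) * algebraMap ℝ Poly (u a i)) ^ x i) *
          (1 + ∑ a, (MvPolynomial.X (Sum.inl a) : Poly)) ^ (N - ∑ i, x i)) *
        ((∏ i, (1 + (∑ b, (MvPolynomial.X (Sum.inr b) : Poly))
            - ∑ b, MvPolynomial.X (Sum.inr b) * algebraMap ℝ Poly (u b i)) ^ x i) *
          (1 + ∑ b, (MvPolynomial.X (Sum.inr b) : Poly)) ^ (N - ∑ i, x i))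
      = (1 + ∑ a, algebraMap ℝ Poly ((∑ s, η s * u a s ^ 2) - 1) *
          (MvPolynomial.X (Sum.inl a) * MvPolynomial.X (Sum.inr a))) ^ N := by
  classical
  set φ := algebraMap ℝ Poly with hφ
  set Z : Fin n → Poly := fun a => MvPolynomial.X (Sum.inl a) with hZ
  set W : Fin n → Poly := fun b => MvPolynomial.X (Sum.inr b) with hW
  rw [← bracket u η h1 h2 Z W]
  rw [EM N (fun i => φ (η i) * (1 + (∑ a, Z a) - ∑ a, Z a * φ (u a i)) *
        (1 + (∑ b, W b) - ∑ b, W b * φ (u b i)))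
      (φ (1 - ∑ j, η j) * ((1 + ∑ a, Z a) * (1 + ∑ b, W b)))]
  refine Finset.sum_congr rfl fun x hx => ?_
  have hxN : ∑ i, x i ≤ N := mem_S.1 hx
  rw [bn_eq x η hxN]
  rw [map_mul, map_mul, map_pow, map_natCast]
  have hprodη : φ (∏ i, η i ^ x i) = ∏ i, φ (η i) ^ x i := by
    rw [map_prod]
    exact Finset.prod_congr rfl fun i _ => by rw [map_pow]
  rw [hprodη]
  have hsplit : ∏ i, (φ (η i) * (1 + (∑ a, Z a) - ∑ a, Z a * φ (u a i)) *
        (1 + (∑ b, W b) - ∑ b, W b * φ (u b i))) ^ x i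
      = (∏ i, φ (η i) ^ x i) *
          (∏ i, (1 + (∑ a, Z a) - ∑ a, Z a * φ (u a i)) ^ x i) *
          ∏ i, (1 + (∑ b, W b) - ∑ b, W b * φ (u b i)) ^ x i := by
    rw [← Finset.prod_mul_distrib, ← Finset.prod_mul_distrib]
    exact Finset.prod_congr rfl fun i _ => by rw [mul_pow, mul_pow]
  rw [hsplit, mul_pow, mul_pow]
  ring

theorem key2
    (h1 : ∀ r, ∑ j, η j * u r j = 1)
    (h2 : ∀ r s, r ≠ s → ∑ j, η j * u r j * u s j = 1) :
    ∑ m ∈ S N n, ∑ m' ∈ S N n,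
        algebraMap ℝ Poly ((mc N m : ℝ) * (mc N m' : ℝ) *
            ∑ x ∈ S N n, bn N x η * P N u m x * P N u m' x) *
          ((∏ a, (MvPolynomial.X (Sum.inl a) : Poly) ^ m a) *
            ∏ b, (MvPolynomial.X (Sum.inr b) : Poly) ^ m' b)
      = (1 + ∑ a, algebraMap ℝ Poly ((∑ s, η s * u a s ^ 2) - 1) *
          (MvPolynomial.X (Sum.inl a) * MvPolynomial.X (Sum.inr a))) ^ N := by
  classical
  rw [← key1 u η h1 h2]
  set φ := algebraMap ℝ Poly with hφ
  set Z : Fin n → Poly := fun a => MvPolynomial.X (Sum.inl a) with hZ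
  set W : Fin n → Poly := fun b => MvPolynomial.X (Sum.inr b) with hW
  have hGz : ∀ x ∈ S N n,
      ((∏ i, (1 + (∑ a, Z a) - ∑ a, Z a * φ (u a i)) ^ x i) *
        (1 + ∑ a, Z a) ^ (N - ∑ i, x i))
      = ∑ m ∈ S N n, (mc N m : Poly) * φ (P N u m x) * ∏ a, Z a ^ m a :=
    fun x hx => (GF N u x (mem_S.1 hx) Z).symm
  have hGw : ∀ x ∈ S N n,
      ((∏ i, (1 + (∑ b, W b) - ∑ b, W b * φ (u b i)) ^ x i) *
        (1 + ∑ b, W b) ^ (N - ∑ i, x i))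
      = ∑ m' ∈ S N n, (mc N m' : Poly) * φ (P N u m' x) * ∏ b, W b ^ m' b :=
    fun x hx => (GF N u x (mem_S.1 hx) W).symm
  refine Eq.symm ?_
  calc ∑ x ∈ S N n, φ (bn N x η) *
        ((∏ i, (1 + (∑ a, Z a) - ∑ a, Z a * φ (u a i)) ^ x i) *
          (1 + ∑ a, Z a) ^ (N - ∑ i, x i)) *
        ((∏ i, (1 + (∑ b, W b) - ∑ b, W b * φ (u b i)) ^ x i) *
          (1 + ∑ b, W b) ^ (N - ∑ i, x i))
      = ∑ x ∈ S N n, ∑ m ∈ S N n, ∑ m' ∈ S N n,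
          φ (bn N x η) * ((mc N m : Poly) * φ (P N u m x) * ∏ a, Z a ^ m a) *
            ((mc N m' : Poly) * φ (P N u m' x) * ∏ b, W b ^ m' b) := by
        refine Finset.sum_congr rfl fun x hx => ?_
        rw [hGz x hx, hGw x hx, mul_assoc, Finset.sum_mul_sum, Finset.mul_sum]
        refine Finset.sum_congr rfl fun m _ => ?_
        rw [Finset.mul_sum]
        refine Finset.sum_congr rfl fun m' _ => ?_
        ring
    _ = ∑ m ∈ S N n, ∑ m' ∈ S N n, ∑ x ∈ S N n,
          φ (bn N x η) * ((mc N m : Poly) * φ (P N u m x) * ∏ a, Z a ^ m a) *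
            ((mc N m' : Poly) * φ (P N u m' x) * ∏ b, W b ^ m' b) := by
        rw [Finset.sum_comm]
        exact Finset.sum_congr rfl fun m _ => Finset.sum_comm
    _ = ∑ m ∈ S N n, ∑ m' ∈ S N n,
          φ ((mc N m : ℝ) * (mc N m' : ℝ) * ∑ x ∈ S N n, bn N x η * P N u m x * P N u m' x) *
            ((∏ a, Z a ^ m a) * ∏ b, W b ^ m' b) := by
        refine Finset.sum_congr rfl fun m _ => Finset.sum_congr rfl fun m' _ => ?_
        rw [map_mul, map_sum, map_mul, map_natCast, map_natCast]
        rw [Finset.mul_sum, Finset.sum_mul]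
        refine Finset.sum_congr rfl fun x _ => ?_
        rw [map_mul, map_mul]
        ring

theorem key3 :
    (1 + ∑ a, algebraMap ℝ Poly ((∑ s, η s * u a s ^ 2) - 1) *
        (MvPolynomial.X (Sum.inl a) * MvPolynomial.X (Sum.inr a))) ^ N
      = ∑ c ∈ S N n, algebraMap ℝ Poly ((mc N c : ℝ) * ∏ a, ((∑ s, η s * u a s ^ 2) - 1) ^ c a) *
          ((∏ a, (MvPolynomial.X (Sum.inl a) : Poly) ^ c a) *
            ∏ b, (MvPolynomial.X (Sum.inr b) : Poly) ^ c b) := by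
  classical
  set φ := algebraMap ℝ Poly with hφ
  rw [add_comm (1 : Poly)]
  rw [EM N (fun a => φ ((∑ s, η s * u a s ^ 2) - 1) *
      (MvPolynomial.X (Sum.inl a) * MvPolynomial.X (Sum.inr a))) 1]
  refine Finset.sum_congr rfl fun c _ => ?_
  rw [one_pow, mul_one, map_mul, map_natCast]
  have hmap : φ (∏ a, ((∑ s, η s * u a s ^ 2) - 1) ^ c a)
      = ∏ a, φ ((∑ s, η s * u a s ^ 2) - 1) ^ c a := by
    rw [map_prod]
    exact Finset.prod_congr rfl fun a _ => by rw [map_pow]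
  rw [hmap]
  have hsplit : ∏ a, (φ ((∑ s, η s * u a s ^ 2) - 1) *
        (MvPolynomial.X (Sum.inl a) * MvPolynomial.X (Sum.inr a))) ^ c a
      = (∏ a, φ ((∑ s, η s * u a s ^ 2) - 1) ^ c a) *
          ((∏ a, (MvPolynomial.X (Sum.inl a) : Poly) ^ c a) *
            ∏ b, (MvPolynomial.X (Sum.inr b) : Poly) ^ c b) := by
    rw [← Finset.prod_mul_distrib, ← Finset.prod_mul_distrib]
    refine Finset.prod_congr rfl fun a _ => by rw [mul_pow, mul_pow]
  rw [hsplit]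
  ring

open MvPolynomial in
lemma monomial_eq_prod (μ μ' : Fin n → ℕ) :
    ((∏ a, (MvPolynomial.X (Sum.inl a) : Poly) ^ μ a) *
        ∏ b, (MvPolynomial.X (Sum.inr b) : Poly) ^ μ' b)
      = MvPolynomial.monomial (Finsupp.equivFunOnFinite.symm (Sum.elim μ μ')) (1 : ℝ) := by
  classical
  set D : (Fin n ⊕ Fin n) →₀ ℕ := Finsupp.equivFunOnFinite.symm (Sum.elim μ μ') with hD
  have hDapp : ∀ s, D s = Sum.elim μ μ' s := fun s => rfl
  rw [← prod_X_pow_eq_monomial]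
  have hsub : ∏ s ∈ D.support, (MvPolynomial.X s : Poly) ^ D s
      = ∏ s : Fin n ⊕ Fin n, (MvPolynomial.X s : Poly) ^ D s := by
    apply Finset.prod_subset (Finset.subset_univ _)
    intro s _ hs
    rw [Finsupp.notMem_support_iff.1 hs, pow_zero]
  rw [hsub, Fintype.prod_sum_type]
  rfl

open MvPolynomial in
lemma coeff_term (m0 m0' : Fin n → ℕ) (r : ℝ) (μ μ' : Fin n → ℕ) :
    MvPolynomial.coeff (Finsupp.equivFunOnFinite.symm (Sum.elim m0 m0'))
        (algebraMap ℝ Poly r * ((∏ a, (MvPolynomial.X (Sum.inl a) : Poly) ^ μ a) *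
          ∏ b, (MvPolynomial.X (Sum.inr b) : Poly) ^ μ' b))
      = if μ = m0 ∧ μ' = m0' then r else 0 := by
  classical
  rw [MvPolynomial.algebraMap_eq, monomial_eq_prod, MvPolynomial.C_mul_monomial, mul_one,
    MvPolynomial.coeff_monomial]
  congr 1
  have : (Finsupp.equivFunOnFinite.symm (Sum.elim μ μ')
      = Finsupp.equivFunOnFinite.symm (Sum.elim m0 m0')) ↔ (μ = m0 ∧ μ' = m0') := by
    rw [Equiv.apply_eq_iff_eq]
    constructor
    · intro h
      constructor
      · funext a; exact congrFun h (Sum.inl a)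
      · funext b; exact congrFun h (Sum.inr b)
    · rintro ⟨rfl, rfl⟩; rfl
  rw [this]

theorem real_orth
    (h1 : ∀ r, ∑ j, η j * u r j = 1)
    (h2 : ∀ r s, r ≠ s → ∑ j, η j * u r j * u s j = 1)
    {m m' : Fin n → ℕ} (hm : m ∈ S N n) (hm' : m' ∈ S N n) :
    (mc N m : ℝ) * (mc N m' : ℝ) * ∑ x ∈ S N n, bn N x η * P N u m x * P N u m' x
      = if m = m' then (mc N m : ℝ) * ∏ a, ((∑ s, η s * u a s ^ 2) - 1) ^ m a else 0 := by
  classical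
  have hkey := (key2 (N := N) u η h1 h2).trans (key3 (N := N) u η)
  have hco := congrArg (MvPolynomial.coeff (Finsupp.equivFunOnFinite.symm (Sum.elim m m'))) hkey
  rw [MvPolynomial.coeff_sum, MvPolynomial.coeff_sum] at hco
  -- LHS evaluation
  have hL : ∑ μ ∈ S N n, MvPolynomial.coeff (Finsupp.equivFunOnFinite.symm (Sum.elim m m'))
        (∑ μ' ∈ S N n, algebraMap ℝ Poly ((mc N μ : ℝ) * (mc N μ' : ℝ) *
            ∑ x ∈ S N n, bn N x η * P N u μ x * P N u μ' x) *
          ((∏ a, (MvPolynomial.X (Sum.inl a) : Poly) ^ μ a) *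
            ∏ b, (MvPolynomial.X (Sum.inr b) : Poly) ^ μ' b))
      = (mc N m : ℝ) * (mc N m' : ℝ) * ∑ x ∈ S N n, bn N x η * P N u m x * P N u m' x := by
    have hinner : ∀ μ ∈ S N n, MvPolynomial.coeff
          (Finsupp.equivFunOnFinite.symm (Sum.elim m m'))
          (∑ μ' ∈ S N n, algebraMap ℝ Poly ((mc N μ : ℝ) * (mc N μ' : ℝ) *
              ∑ x ∈ S N n, bn N x η * P N u μ x * P N u μ' x) *
            ((∏ a, (MvPolynomial.X (Sum.inl a) : Poly) ^ μ a) *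
              ∏ b, (MvPolynomial.X (Sum.inr b) : Poly) ^ μ' b))
        = if μ = m then (mc N μ : ℝ) * (mc N m' : ℝ) *
            ∑ x ∈ S N n, bn N x η * P N u μ x * P N u m' x else 0 := by
      intro μ _
      rw [MvPolynomial.coeff_sum]
      have : ∀ μ' ∈ S N n, MvPolynomial.coeff
            (Finsupp.equivFunOnFinite.symm (Sum.elim m m'))
            (algebraMap ℝ Poly ((mc N μ : ℝ) * (mc N μ' : ℝ) *
              ∑ x ∈ S N n, bn N x η * P N u μ x * P N u μ' x) *
            ((∏ a, (MvPolynomial.X (Sum.inl a) : Poly) ^ μ a) *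
              ∏ b, (MvPolynomial.X (Sum.inr b) : Poly) ^ μ' b))
          = if μ' = m' then (if μ = m then (mc N μ : ℝ) * (mc N μ' : ℝ) *
              ∑ x ∈ S N n, bn N x η * P N u μ x * P N u μ' x else 0) else 0 := by
        intro μ' _
        rw [coeff_term m m' _ μ μ']
        by_cases hμ : μ = m <;> by_cases hμ' : μ' = m' <;>
          simp [hμ, hμ']
      rw [Finset.sum_congr rfl this, Finset.sum_ite_eq' (S N n) m'
        (fun μ' => if μ = m then (mc N μ : ℝ) * (mc N μ' : ℝ) *
          ∑ x ∈ S N n, bn N x η * P N u μ x * P N u μ' x else 0), if_pos hm']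
    rw [Finset.sum_congr rfl hinner, Finset.sum_ite_eq' (S N n) m
      (fun μ => (mc N μ : ℝ) * (mc N m' : ℝ) *
        ∑ x ∈ S N n, bn N x η * P N u μ x * P N u m' x), if_pos hm]
  -- RHS evaluation
  have hR : ∑ c ∈ S N n, MvPolynomial.coeff (Finsupp.equivFunOnFinite.symm (Sum.elim m m'))
        (algebraMap ℝ Poly ((mc N c : ℝ) * ∏ a, ((∑ s, η s * u a s ^ 2) - 1) ^ c a) *
          ((∏ a, (MvPolynomial.X (Sum.inl a) : Poly) ^ c a) *
            ∏ b, (MvPolynomial.X (Sum.inr b) : Poly) ^ c b))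
      = if m = m' then (mc N m : ℝ) * ∏ a, ((∑ s, η s * u a s ^ 2) - 1) ^ m a else 0 := by
    have hterm : ∀ c ∈ S N n, MvPolynomial.coeff
          (Finsupp.equivFunOnFinite.symm (Sum.elim m m'))
          (algebraMap ℝ Poly ((mc N c : ℝ) * ∏ a, ((∑ s, η s * u a s ^ 2) - 1) ^ c a) *
            ((∏ a, (MvPolynomial.X (Sum.inl a) : Poly) ^ c a) *
              ∏ b, (MvPolynomial.X (Sum.inr b) : Poly) ^ c b))
        = if c = m ∧ c = m' then (mc N c : ℝ) * ∏ a, ((∑ s, η s * u a s ^ 2) - 1) ^ c a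
            else 0 := fun c _ => coeff_term m m' _ c c
    rw [Finset.sum_congr rfl hterm]
    by_cases hmm : m = m'
    · subst hmm
      have : ∀ c ∈ S N n, (if c = m ∧ c = m then (mc N c : ℝ) *
            ∏ a, ((∑ s, η s * u a s ^ 2) - 1) ^ c a else 0)
          = if c = m then (mc N c : ℝ) * ∏ a, ((∑ s, η s * u a s ^ 2) - 1) ^ c a else 0 :=
        fun c _ => by by_cases hc : c = m <;> simp [hc]
      rw [Finset.sum_congr rfl this, Finset.sum_ite_eq' (S N n) m
        (fun c => (mc N c : ℝ) * ∏ a, ((∑ s, η s * u a s ^ 2) - 1) ^ c a), if_pos hm]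
      rw [if_pos rfl]
    · rw [if_neg hmm]
      apply Finset.sum_eq_zero
      intro c _
      rw [if_neg]
      rintro ⟨rfl, h⟩
      exact hmm h
  rw [hL, hR] at hco
  exact hco

end Main

end Kr

/-- Orthogonality (4.16) of the multivariable Krawtchouk polynomials with
respect to the multinomial weight, under conditions (3.4) and (4.11). -/
theorem stmt_11 (N n : ℕ) (hN : 1 ≤ N) (hn : 1 ≤ n)
    (u : Fin n → Fin n → ℝ) (η : Fin n → ℝ)
    (hη : ∀ j, 0 ≤ η j) (hηs : ∑ j, η j ≤ 1)
    (h1 : ∀ r, ∑ j, η j * u r j = 1)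
    (h2 : ∀ r s, r ≠ s → ∑ j, η j * u r j * u s j = 1) :
    ∀ m m' : Fin n → ℕ, ∑ k, m k ≤ N → ∑ k, m' k ≤ N →
      ∑ x ∈ Finset.filter (fun x => ∑ i, x i ≤ N)
          (Fintype.piFinset fun _ : Fin n => Finset.range (N + 1)),
        bn N x η * P N u m x * P N u m' x
      = (if m = m' then (1 : ℝ) else 0) *
          ((∏ i, ((m i).factorial : ℝ)) * ((N - ∑ k, m k).factorial : ℝ) / (N.factorial : ℝ)) *
          ∏ j, ((∑ s, η s * u j s ^ 2) - 1) ^ m j := by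
  intro m m' hm hm'
  have hmS : m ∈ Kr.S N n := Kr.mem_S.2 hm
  have hm'S : m' ∈ Kr.S N n := Kr.mem_S.2 hm'
  have horth := Kr.real_orth u η h1 h2 hmS hm'S
  have hmc : (Kr.mc N m : ℝ) ≠ 0 := by
    exact_mod_cast (Kr.mc_pos N m).ne'
  have hmc' : (Kr.mc N m' : ℝ) ≠ 0 := by
    exact_mod_cast (Kr.mc_pos N m').ne'
  show ∑ x ∈ Kr.S N n, bn N x η * P N u m x * P N u m' x = _
  by_cases hmm : m = m'
  · subst hmm
    rw [if_pos rfl] at horth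
    rw [if_pos rfl]
    have hT : (Kr.mc N m : ℝ) * ∑ x ∈ Kr.S N n, bn N x η * P N u m x * P N u m x
        = ∏ j, ((∑ s, η s * u j s ^ 2) - 1) ^ m j :=
      mul_left_cancel₀ hmc (by rw [← mul_assoc]; exact horth)
    have hspec := Kr.mc_spec (Kr.mem_S.1 hmS)
    have hfaceq : (∏ i, ((m i).factorial : ℝ)) * ((N - ∑ k, m k).factorial : ℝ)
        = (N.factorial : ℝ) / (Kr.mc N m : ℝ) := by
      rw [eq_div_iff hmc]
      have := congrArg (fun t : ℕ => (t : ℝ)) hspec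
      push_cast at this
      linarith [this]
    rw [hfaceq]
    have hNf : (N.factorial : ℝ) ≠ 0 := by positivity
    rw [← hT]
    field_simp
  · rw [if_neg hmm] at horth
    rw [if_neg hmm]
    have hT : ∑ x ∈ Kr.S N n, bn N x η * P N u m x * P N u m' x = 0 := by
      have h := horth
      rcases mul_eq_zero.1 h with h' | h'
      · rcases mul_eq_zero.1 h' with h'' | h''
        · exact absurd h'' hmc
        · exact absurd h'' hmc'
      · exact h'
    rw [hT]
    ring
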